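/- Let X be a finite set with |X| = n, let m be a positive integer, let F be a family of m-element subsets of X, and let t be a nonnegative integer with 2^t·m ≤ n. Then |{T ⊆ X : |T| = 2^t·m} \ Ext(F, 2^t·m)| / C(n, 2^t·m) ≤ ( |{U ⊆ X : |U| = m} \ F| / C(n, m) )^{2^t}. In particular, repeatedly doubling the extension parameter t times multiplies the sparsity of the complement by at least 2^t. -/

import Mathlib

open Finset

/-- The `l`-extension of a family `F`: all `l`-subsets of the universe
containing some member of `F`. -/
def ExtFamily {α : Type} [Fintype α] [DecidableEq α]
    (F : Finset (Finset α)) (l : ℕ) : Finset (Finset α) :=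
  (Finset.powersetCard l (Finset.univ : Finset α)).filter (fun T => ∃ U ∈ F, U ⊆ T)

set_option linter.unusedSectionVars false
set_option linter.unusedTactic false
set_option linter.deprecated false
set_option maxHeartbeats 1000000

section Aux

variable {α : Type} [Fintype α] [DecidableEq α]

/-- The family of `l`-subsets of the universe containing no member of `F`. -/
def AvoidF (F : Finset (Finset α)) (l : ℕ) : Finset (Finset α) :=
  (Finset.powersetCard l (Finset.univ : Finset α)).filter (fun T => ∀ U ∈ F, ¬ U ⊆ T)

lemma avoid_eq_sdiffExt (F : Finset (Finset α)) (l : ℕ) :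
    Finset.powersetCard l (Finset.univ : Finset α) \ ExtFamily F l = AvoidF F l := by
  ext T
  simp only [mem_sdiff, mem_filter, ExtFamily, AvoidF, not_and, not_exists]
  tauto

lemma card_filter_superset {s R : Finset α} (hR : R ⊆ s) {k : ℕ} (hk : R.card ≤ k) :
    ((powersetCard k s).filter (fun B => R ⊆ B)).card
      = (s.card - R.card).choose (k - R.card) := by
  have key : ((powersetCard k s).filter (fun B => R ⊆ B)).card
      = (powersetCard (k - R.card) (s \ R)).card := by
    apply card_bij (fun B _ => B \ R)
    · rintro B hB
      simp only [mem_filter, mem_powersetCard] at hB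
      obtain ⟨⟨hBs, hBk⟩, hRB⟩ := hB
      rw [mem_powersetCard]
      exact ⟨sdiff_subset_sdiff hBs Subset.rfl, by rw [card_sdiff_of_subset hRB, hBk]⟩
    · intro B₁ h₁ B₂ h₂ h
      simp only [mem_filter, mem_powersetCard] at h₁ h₂
      rw [← sdiff_union_of_subset h₁.2, ← sdiff_union_of_subset h₂.2, h]
    · intro C hC
      rw [mem_powersetCard] at hC
      have hdisj : Disjoint C R := disjoint_of_subset_left hC.1 sdiff_disjoint
      refine ⟨C ∪ R, ?_, ?_⟩
      · simp only [mem_filter, mem_powersetCard]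
        refine ⟨⟨union_subset (hC.1.trans (sdiff_subset)) hR, ?_⟩, subset_union_right⟩
        rw [card_union_of_disjoint hdisj, hC.2, Nat.sub_add_cancel hk]
      · rw [union_sdiff_right, sdiff_eq_self_of_disjoint hdisj]
  rw [key, card_powersetCard, card_sdiff_of_subset hR]

lemma perA (F : Finset (Finset α)) (p : ℕ) (hp : 2 * p ≤ Fintype.card α)
    (A : Finset α) (hA : A.card = p) :
    ((powersetCard p (Finset.univ \ A)).filter (fun B => A ∪ B ∈ AvoidF F (2 * p))).card
        * (Fintype.card α).choose p
      ≤ (AvoidF F p).card * ((Fintype.card α) - p).choose p := by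
  set n := Fintype.card α with hn
  set q := n - p with hq
  have hpn : p ≤ n := le_trans (by omega) hp
  have hpq : p ≤ q := by omega
  have hcardqA : (Finset.univ \ A).card = q := by
    rw [card_sdiff_of_subset (subset_univ A), card_univ, hA]
  set 𝔅 := (powersetCard p (Finset.univ \ A)).filter
      (fun B => A ∪ B ∈ AvoidF F (2 * p)) with h𝔅
  set Rj := fun j => (powersetCard (p - j) (Finset.univ \ A)).filter
      (fun R => ∃ B ∈ 𝔅, R ⊆ B) with hRj
  set Gj := fun j => (AvoidF F p).filter (fun C => (C ∩ A).card = j) with hGj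
  -- step (a)
  have stepa : ∀ j ≤ p, 𝔅.card * p.choose (p - j) ≤ (Rj j).card * (q - (p - j)).choose j := by
    intro j hj
    have lhs_eq : (𝔅.sigma (fun B => powersetCard (p - j) B)).card
        = 𝔅.card * p.choose (p - j) := by
      rw [card_sigma]
      rw [Finset.sum_congr rfl (fun B hB => ?_), Finset.sum_const, smul_eq_mul]
      rw [card_powersetCard]
      congr 1
      simp only [h𝔅, mem_filter, mem_powersetCard] at hB
      exact hB.1.2
    have rhs_eq : ((Rj j).sigma
          (fun R => (powersetCard p (Finset.univ \ A)).filter (fun B => R ⊆ B))).card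
        = (Rj j).card * (q - (p - j)).choose j := by
      rw [card_sigma]
      rw [Finset.sum_congr rfl (fun R hR => ?_), Finset.sum_const, smul_eq_mul]
      simp only [hRj, mem_filter, mem_powersetCard] at hR
      rw [card_filter_superset hR.1.1 (by omega : R.card ≤ p), hcardqA, hR.1.2]
      congr 1
      omega
    rw [← lhs_eq, ← rhs_eq]
    apply Finset.card_le_card_of_injOn (fun x => ⟨x.2, x.1⟩)
    · rintro ⟨B, R⟩ hx
      simp only [Finset.mem_coe, Finset.mem_sigma] at hx ⊢
      obtain ⟨hB, hR⟩ := hx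
      rw [mem_powersetCard] at hR
      simp only [h𝔅, mem_filter, mem_powersetCard] at hB
      constructor
      · simp only [hRj, mem_filter, mem_powersetCard]
        exact ⟨⟨hR.1.trans hB.1.1, hR.2⟩, B, by simp [h𝔅, mem_filter, mem_powersetCard, hB.1.1, hB.1.2, hB.2], hR.1⟩
      · simp only [mem_filter, mem_powersetCard]
        exact ⟨⟨hB.1.1, hB.1.2⟩, hR.1⟩
    · rintro ⟨B, R⟩ h₁ ⟨B', R'⟩ h₂ h
      simp only [Sigma.mk.inj_iff, heq_eq_eq] at h
      simp [h.1, h.2]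
  -- step (b)
  have stepb : ∀ j ≤ p, p.choose j * (Rj j).card ≤ (Gj j).card := by
    intro j hj
    have lhs_eq : ((powersetCard j A) ×ˢ (Rj j)).card = p.choose j * (Rj j).card := by
      rw [card_product, card_powersetCard, hA]
    rw [← lhs_eq]
    apply Finset.card_le_card_of_injOn (fun x => x.1 ∪ x.2)
    · rintro ⟨S, R⟩ hx
      simp only [Finset.mem_coe, Finset.mem_product, mem_powersetCard] at hx
      obtain ⟨⟨hSA, hSj⟩, hR⟩ := hx
      simp only [hRj, mem_filter, mem_powersetCard] at hR
      obtain ⟨⟨hRA, hRcard⟩, B, hB, hRB⟩ := hR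
      simp only [h𝔅, mem_filter, mem_powersetCard] at hB
      have hdisj : Disjoint S R := by
        rw [Finset.disjoint_left]
        intro x hxS hxR
        exact (Finset.mem_sdiff.mp (hRA hxR)).2 (hSA hxS)
      have hAB : A ∪ B ∈ AvoidF F (2 * p) := hB.2
      simp only [AvoidF, mem_filter, mem_powersetCard] at hAB ⊢
      have hsub : S ∪ R ⊆ A ∪ B := union_subset_union hSA hRB
      simp only [Finset.mem_coe, hGj, mem_filter, AvoidF, mem_filter, mem_powersetCard]
      refine ⟨⟨⟨subset_univ _, ?_⟩, ?_⟩, ?_⟩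
      · rw [card_union_of_disjoint hdisj, hSj, hRcard]; omega
      · intro U hU hUsub
        exact hAB.2 U hU (hUsub.trans hsub)
      · have : (S ∪ R) ∩ A = S := by
          rw [union_inter_distrib_right, inter_eq_left.mpr hSA]
          have : R ∩ A = ∅ := by
            rw [← Finset.disjoint_iff_inter_eq_empty, Finset.disjoint_left]
            intro x hxR; exact (Finset.mem_sdiff.mp (hRA hxR)).2
          rw [this, union_empty]
        rw [this, hSj]
    · rintro ⟨S, R⟩ h₁ ⟨S', R'⟩ h₂ h
      simp only [Finset.mem_coe, Finset.mem_product, mem_powersetCard] at h₁ h₂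
      replace h : S ∪ R = S' ∪ R' := h
      have key : ∀ (S R : Finset α), S ⊆ A → R ⊆ Finset.univ \ A →
          (S ∪ R) ∩ A = S ∧ (S ∪ R) \ A = R := by
        intro S R hSA hRA
        have hRA' : R ∩ A = ∅ := by
          rw [← Finset.disjoint_iff_inter_eq_empty, Finset.disjoint_left]
          intro x hxR; exact (Finset.mem_sdiff.mp (hRA hxR)).2
        constructor
        · rw [union_inter_distrib_right, inter_eq_left.mpr hSA, hRA', union_empty]
        · rw [union_sdiff_distrib, sdiff_eq_empty_iff_subset.mpr hSA, empty_union]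
          apply sdiff_eq_self_of_disjoint
          rw [Finset.disjoint_left]
          intro x hxR hxA
          have hme := Finset.mem_inter.mpr ⟨hxR, hxA⟩
          rw [hRA'] at hme
          exact absurd hme (Finset.notMem_empty x)
      obtain ⟨hk1, hk2⟩ := key S R h₁.1.1 (by
        have hh := h₁.2
        simp only [hRj, mem_filter, mem_powersetCard] at hh
        exact hh.1.1)
      obtain ⟨hk1', hk2'⟩ := key S' R' h₂.1.1 (by
        have hh := h₂.2
        simp only [hRj, mem_filter, mem_powersetCard] at hh
        exact hh.1.1)
      have e1 : S = S' := by rw [← hk1, ← hk1', h]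
      have e2 : R = R' := by rw [← hk2, ← hk2', h]
      simp [e1, e2]
  -- step (c)
  have stepc : ∑ j ∈ Finset.range (p + 1), (Gj j).card = (AvoidF F p).card := by
    symm
    apply Finset.card_eq_sum_card_fiberwise
    intro C hC
    simp only [AvoidF, mem_filter, mem_powersetCard] at hC
    rw [Finset.mem_coe, Finset.mem_range, Nat.lt_succ_iff, ← hA]
    exact card_le_card (inter_subset_right)
  -- Vandermonde
  have vdm : n.choose p = ∑ j ∈ Finset.range (p + 1), p.choose j * q.choose (p - j) := by
    have : n = p + q := by omega
    rw [this, Nat.add_choose_eq, Finset.Nat.sum_antidiagonal_eq_sum_range_succ_mk]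
  calc 𝔅.card * n.choose p
      = ∑ j ∈ Finset.range (p + 1), 𝔅.card * (p.choose j * q.choose (p - j)) := by
        rw [vdm, Finset.mul_sum]
    _ ≤ ∑ j ∈ Finset.range (p + 1), (Gj j).card * q.choose p := by
        apply Finset.sum_le_sum
        intro j hj
        rw [Finset.mem_range, Nat.lt_succ_iff] at hj
        have hpos : 0 < (q - (p - j)).choose j := Nat.choose_pos (by omega)
        apply Nat.le_of_mul_le_mul_right _ hpos
        have id1 : q.choose p * p.choose (p - j) = q.choose (p - j) * (q - (p - j)).choose j := by
          have := Nat.choose_mul (n := q) (Nat.sub_le p j)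
          rwa [Nat.sub_sub_self hj] at this
        calc 𝔅.card * (p.choose j * q.choose (p - j)) * (q - (p - j)).choose j
            = p.choose j * q.choose p * (𝔅.card * p.choose (p - j)) := by
              have e : 𝔅.card * (p.choose j * q.choose (p - j)) * (q - (p - j)).choose j
                  = 𝔅.card * p.choose j * (q.choose (p - j) * (q - (p - j)).choose j) := by ring
              rw [e, ← id1]; ring
          _ ≤ p.choose j * q.choose p * ((Rj j).card * (q - (p - j)).choose j) := by
              exact Nat.mul_le_mul_left _ (stepa j hj)
          _ = (p.choose j * (Rj j).card) * q.choose p * (q - (p - j)).choose j := by ring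
          _ ≤ (Gj j).card * q.choose p * (q - (p - j)).choose j := by
              exact Nat.mul_le_mul_right _ (Nat.mul_le_mul_right _ (stepb j hj))
    _ = (AvoidF F p).card * q.choose p := by
        rw [← Finset.sum_mul, stepc]

lemma stepB (F : Finset (Finset α)) (p : ℕ) (hp : 2 * p ≤ Fintype.card α) :
    (AvoidF F (2 * p)).card * (2 * p).choose p * (Fintype.card α).choose p
      ≤ (AvoidF F p).card * ((AvoidF F p).card * ((Fintype.card α) - p).choose p) := by
  set n := Fintype.card α with hn
  set 𝔅 := fun A : Finset α => (powersetCard p (Finset.univ \ A)).filter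
      (fun B => A ∪ B ∈ AvoidF F (2 * p)) with h𝔅
  have hcount : (AvoidF F (2 * p)).card * (2 * p).choose p
      = ∑ A ∈ AvoidF F p, (𝔅 A).card := by
    have e1 : ((AvoidF F (2 * p)).sigma (fun T => powersetCard p T)).card
        = (AvoidF F (2 * p)).card * (2 * p).choose p := by
      rw [card_sigma]
      rw [Finset.sum_congr rfl (fun T hT => ?_), Finset.sum_const, smul_eq_mul]
      rw [card_powersetCard]
      congr 1
      simp only [AvoidF, mem_filter, mem_powersetCard] at hT
      exact hT.1.2
    have e2 : ((AvoidF F p).sigma (fun A => 𝔅 A)).card = ∑ A ∈ AvoidF F p, (𝔅 A).card :=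
      card_sigma ..
    rw [← e1, ← e2]
    apply card_bij (fun x _ => (⟨x.2, x.1 \ x.2⟩ : (_ : Finset α) × Finset α))
    · rintro ⟨T, A⟩ hx
      simp only [Finset.mem_sigma] at hx ⊢
      obtain ⟨hT, hA⟩ := hx
      rw [mem_powersetCard] at hA
      have hTmem := hT
      simp only [AvoidF, mem_filter, mem_powersetCard] at hT
      constructor
      · simp only [AvoidF, mem_filter, mem_powersetCard]
        exact ⟨⟨subset_univ _, hA.2⟩, fun U hU hUA => hT.2 U hU (hUA.trans hA.1)⟩
      · simp only [h𝔅, mem_filter, mem_powersetCard]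
        refine ⟨⟨fun x hx => ?_, ?_⟩, ?_⟩
        · rw [Finset.mem_sdiff] at hx ⊢
          exact ⟨mem_univ _, hx.2⟩
        · rw [card_sdiff_of_subset hA.1, hT.1.2, hA.2]; omega
        · rw [union_sdiff_of_subset hA.1]; exact hTmem
    · rintro ⟨T, A⟩ h₁ ⟨T', A'⟩ h₂ h
      simp only [Sigma.mk.inj_iff, heq_eq_eq] at h
      simp only [Finset.mem_sigma, mem_powersetCard] at h₁ h₂
      have : T = T' := by
        rw [← union_sdiff_of_subset h₁.2.1, ← union_sdiff_of_subset h₂.2.1, h.2, h.1]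
      simp [this, h.1]
    · rintro ⟨A, B⟩ hx
      simp only [Finset.mem_sigma] at hx
      obtain ⟨hA, hB⟩ := hx
      have hAmem := hA
      simp only [AvoidF, mem_filter, mem_powersetCard] at hA
      simp only [h𝔅, mem_filter, mem_powersetCard] at hB
      have hdisj : Disjoint A B := by
        rw [Finset.disjoint_left]
        intro x hxA hxB
        exact (Finset.mem_sdiff.mp (hB.1.1 hxB)).2 hxA
      refine ⟨⟨A ∪ B, A⟩, ?_, ?_⟩
      · simp only [Finset.mem_sigma, mem_powersetCard]
        exact ⟨hB.2, subset_union_left, hA.1.2⟩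
      · simp only [Sigma.mk.inj_iff, heq_eq_eq]
        exact ⟨trivial, by rw [union_sdiff_cancel_left hdisj]⟩
  calc (AvoidF F (2 * p)).card * (2 * p).choose p * n.choose p
      = ∑ A ∈ AvoidF F p, (𝔅 A).card * n.choose p := by rw [hcount, Finset.sum_mul]
    _ ≤ ∑ A ∈ AvoidF F p, (AvoidF F p).card * (n - p).choose p := by
        apply Finset.sum_le_sum
        intro A hA
        have hAcard : A.card = p := by
          simp only [AvoidF, mem_filter, mem_powersetCard] at hA
          exact hA.1.2
        exact perA F p hp A hAcard
    _ = (AvoidF F p).card * ((AvoidF F p).card * (n - p).choose p) := by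
        rw [Finset.sum_const, smul_eq_mul]

lemma stepNat2 (F : Finset (Finset α)) (p : ℕ) (hp : 2 * p ≤ Fintype.card α) :
    (AvoidF F (2 * p)).card * ((Fintype.card α).choose p) ^ 2
      ≤ ((AvoidF F p).card) ^ 2 * (Fintype.card α).choose (2 * p) := by
  set n := Fintype.card α with hn
  have hid : n.choose (2 * p) * (2 * p).choose p = n.choose p * (n - p).choose p := by
    have h := Nat.choose_mul (n := n) (by omega : p ≤ 2 * p)
    have h2 : 2 * p - p = p := by omega
    rwa [h2] at h
  apply Nat.le_of_mul_le_mul_right _ (Nat.choose_pos (by omega : p ≤ 2 * p))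
  calc (AvoidF F (2 * p)).card * (n.choose p) ^ 2 * (2 * p).choose p
      = ((AvoidF F (2 * p)).card * (2 * p).choose p * n.choose p) * n.choose p := by ring
    _ ≤ ((AvoidF F p).card * ((AvoidF F p).card * (n - p).choose p)) * n.choose p :=
        Nat.mul_le_mul_right _ (stepB F p hp)
    _ = ((AvoidF F p).card) ^ 2 * (n.choose p * (n - p).choose p) := by ring
    _ = ((AvoidF F p).card) ^ 2 * (n.choose (2 * p) * (2 * p).choose p) := by rw [hid]
    _ = ((AvoidF F p).card) ^ 2 * n.choose (2 * p) * (2 * p).choose p := by ring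

lemma stepReal (F : Finset (Finset α)) (p : ℕ) (hp : 2 * p ≤ Fintype.card α) :
    ((AvoidF F (2 * p)).card : ℝ) / ((Fintype.card α).choose (2 * p) : ℝ)
      ≤ (((AvoidF F p).card : ℝ) / ((Fintype.card α).choose p : ℝ)) ^ 2 := by
  set n := Fintype.card α with hn
  have h1 : (0 : ℝ) < (n.choose (2 * p) : ℝ) := by
    exact_mod_cast Nat.choose_pos hp
  have h2 : (0 : ℝ) < (n.choose p : ℝ) := by
    exact_mod_cast Nat.choose_pos (by omega : p ≤ n)
  rw [div_pow, div_le_div_iff₀ h1 (by positivity)]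
  have := stepNat2 F p hp
  exact_mod_cast (by push_cast; exact_mod_cast this :
    ((AvoidF F (2 * p)).card : ℝ) * ((n.choose p : ℝ)) ^ 2
      ≤ (((AvoidF F p).card : ℝ)) ^ 2 * (n.choose (2 * p) : ℝ))

lemma mainAux (F : Finset (Finset α)) (m : ℕ) :
    ∀ t : ℕ, 2 ^ t * m ≤ Fintype.card α →
      ((AvoidF F (2 ^ t * m)).card : ℝ) / ((Fintype.card α).choose (2 ^ t * m) : ℝ)
        ≤ (((AvoidF F m).card : ℝ) / ((Fintype.card α).choose m : ℝ)) ^ (2 ^ t) := by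
  intro t
  induction t with
  | zero => intro h; simp
  | succ t ih =>
    intro h
    have hle : 2 ^ t * m ≤ 2 ^ (t + 1) * m := by
      have : (2:ℕ) ^ t ≤ 2 ^ (t + 1) := Nat.pow_le_pow_right (by norm_num) (by omega)
      exact Nat.mul_le_mul_right m this
    have ht' : 2 ^ t * m ≤ Fintype.card α := le_trans hle h
    have hp : 2 * (2 ^ t * m) ≤ Fintype.card α := by
      have : 2 * (2 ^ t * m) = 2 ^ (t + 1) * m := by ring
      omega
    have e : 2 ^ (t + 1) * m = 2 * (2 ^ t * m) := by ring
    have step := stepReal F (2 ^ t * m) hp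
    rw [e]
    refine le_trans step ?_
    have hnn : (0:ℝ) ≤ ((AvoidF F (2 ^ t * m)).card : ℝ)
        / ((Fintype.card α).choose (2 ^ t * m) : ℝ) := by positivity
    calc (((AvoidF F (2 ^ t * m)).card : ℝ) / ((Fintype.card α).choose (2 ^ t * m) : ℝ)) ^ 2
        ≤ ((((AvoidF F m).card : ℝ) / ((Fintype.card α).choose m : ℝ)) ^ (2 ^ t)) ^ 2 := by
          apply pow_le_pow_left₀ hnn (ih ht')
      _ = (((AvoidF F m).card : ℝ) / ((Fintype.card α).choose m : ℝ)) ^ (2 ^ (t + 1)) := by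
          rw [← pow_mul, pow_succ]

lemma avoid_eq_sdiff' (F : Finset (Finset α)) (m : ℕ) (hF : ∀ U ∈ F, U.card = m) :
    Finset.powersetCard m (Finset.univ : Finset α) \ F = AvoidF F m := by
  ext T
  simp only [mem_sdiff, AvoidF, mem_filter, mem_powersetCard]
  constructor
  · rintro ⟨⟨hTu, hTc⟩, hTF⟩
    refine ⟨⟨hTu, hTc⟩, fun U hU hUT => hTF ?_⟩
    have : U = T := Finset.eq_of_subset_of_card_le hUT (by rw [hF U hU, hTc])
    rwa [← this]
  · rintro ⟨⟨hTu, hTc⟩, hav⟩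
    exact ⟨⟨hTu, hTc⟩, fun hTF => hav T hTF Subset.rfl⟩

end Aux

/-- For a family `F` of `m`-subsets of an `n`-set and `t ≥ 0`
with `2^t·m ≤ n`, the density of the complement of `Ext(F, 2^t·m)` among
`2^t·m`-sets is at most the `2^t`-th power of the density of the complement of
`F` among `m`-sets (iterated doubling multiplies the sparsity of the
complement by at least `2^t`). -/
theorem ext_iterated_double_sparsity (α : Type) [Fintype α] [DecidableEq α]
    (m t : ℕ) (hm : 0 < m) (ht : 2 ^ t * m ≤ Fintype.card α)
    (F : Finset (Finset α)) (hF : ∀ U ∈ F, U.card = m) :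
    (((Finset.powersetCard (2 ^ t * m) (Finset.univ : Finset α)
        \ ExtFamily F (2 ^ t * m)).card : ℝ) /
        ((Fintype.card α).choose (2 ^ t * m) : ℝ)) ≤
      (((Finset.powersetCard m (Finset.univ : Finset α) \ F).card : ℝ) /
        ((Fintype.card α).choose m : ℝ)) ^ (2 ^ t) := by
  rw [avoid_eq_sdiffExt F (2 ^ t * m), avoid_eq_sdiff' F m hF]
  exact mainAux F m t ht
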